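/- Let a < b be real numbers, let α ∈ (1,2), and let f : ℝ → ℝ be bounded, (b−a)-periodic, satisfy ∫_a^b f(s) ds = 0, and be continuous at every point not of the form a + k(b−a) with k ∈ ℤ. Then for every x ∈ ℝ the improper integral lim_{T→∞} ∫_x^T f(s)·(s−x)^{1−α} ds exists and is finite, and likewise the improper integral lim_{T→∞} ∫_{−T}^x f(s)·(x−s)^{1−α} ds exists and is finite. -/

import Mathlib

open Filter Topology intervalIntegral
open MeasureTheory Set


lemma measurable_rpow_const' (c : ℝ) : Measurable fun y : ℝ => y ^ c :=
  measurable_of_continuousOn_compl_singleton 0 fun y hy =>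
    (Real.continuousAt_rpow_const y c (Or.inl hy)).continuousWithinAt

lemma exists_tendsto_right (a b α : ℝ) (hab : a < b) (hα : α ∈ Set.Ioo (1 : ℝ) 2)
    (f : ℝ → ℝ)
    (hbd : ∃ M, ∀ x, |f x| ≤ M)
    (hper : ∀ x, f (x + (b - a)) = f x)
    (hmean : (∫ s in a..b, f s) = 0)
    (hcont : ∀ x, (∀ k : ℤ, x ≠ a + k * (b - a)) → ContinuousAt f x)
    (x : ℝ) :
    ∃ L : ℝ, Tendsto (fun T => ∫ s in x..T, f s * (s - x) ^ (1 - α)) atTop (𝓝 L) := by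
  obtain ⟨M, hM⟩ := hbd
  have hM0 : 0 ≤ M := le_trans (abs_nonneg _) (hM 0)
  set P : ℝ := b - a with hPdef
  have hP : 0 < P := sub_pos.2 hab
  have hfper : Function.Periodic f P := hper
  have hα1 : (1:ℝ) < α := hα.1
  have hα2 : α < 2 := hα.2
  -- the countable exceptional set
  set D : Set ℝ := Set.range (fun k : ℤ => a + k * P) with hDdef
  have hDc : D.Countable := Set.countable_range _
  have hDmeas : volume D = 0 := hDc.measure_zero _
  -- measurability of f
  have hmeas : AEStronglyMeasurable f volume := by
    have hcontOn : ContinuousOn f Dᶜ := by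
      intro y hy
      refine (hcont y ?_).continuousWithinAt
      intro k hk
      exact hy ⟨k, hk.symm⟩
    have := hcontOn.aestronglyMeasurable (μ := volume) (hDc.measurableSet.compl)
    rwa [Measure.restrict_eq_self_of_ae_mem ?_] at this
    · rw [ae_iff]
      simpa using hDmeas
  -- interval integrability of f everywhere
  have hfint : ∀ c d : ℝ, IntervalIntegrable f volume c d := by
    intro c d
    rw [intervalIntegrable_iff]
    exact Integrable.mono' (integrableOn_const (C := M) measure_Ioc_lt_top.ne)
      hmeas.restrict (Filter.Eventually.of_forall fun s => by simpa using hM s)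
  -- the primitive F
  set F : ℝ → ℝ := fun t => ∫ s in x..t, f s with hFdef
  have hFcont : Continuous F := intervalIntegral.continuous_primitive (fun c d => hfint c d) x
  have hFper : Function.Periodic F P := by
    intro t
    have h1 : F (t + P) - F t = ∫ s in t..t+P, f s := by
      have := intervalIntegral.integral_add_adjacent_intervals (hfint x t) (hfint t (t+P))
      simp only [hFdef]
      linarith [this]
    have h2 : (∫ s in t..t+P, f s) = ∫ s in a..a+P, f s :=
      hfper.intervalIntegral_add_eq t a
    have h3 : (∫ s in a..a+P, f s) = 0 := by
      have : a + P = b := by simp [hPdef]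
      rw [this]; exact hmean
    have := h1.trans (h2.trans h3)
    linarith [this]
  have hFbound : ∃ C : ℝ, 0 ≤ C ∧ ∀ t, |F t| ≤ C := by
    have hb := hFper.isBounded_of_continuous (ne_of_gt hP) hFcont
    obtain ⟨C, hC⟩ := isBounded_iff_forall_norm_le.1 hb
    exact ⟨max C 0, le_max_right _ _, fun t =>
      le_trans (by simpa [Real.norm_eq_abs] using hC (F t) ⟨t, rfl⟩) (le_max_left _ _)⟩
  obtain ⟨C, hC0, hC⟩ := hFbound
  -- notation
  set φ : ℝ → ℝ := fun s => f s * (s - x) ^ (1 - α) with hφdef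
  set g : ℝ → ℝ := fun s => F s * (s - x) ^ (-α) with hgdef
  have hvmeas : Measurable fun s : ℝ => (s - x) ^ (1 - α) :=
    (measurable_rpow_const' (1 - α)).comp (measurable_id.sub_const x)
  have hφmeas : AEStronglyMeasurable φ volume :=
    hmeas.mul hvmeas.aestronglyMeasurable
  have hgmeas : Measurable g :=
    hFcont.measurable.mul ((measurable_rpow_const' (-α)).comp (measurable_id.sub_const x))
  -- integrability of φ on [x, x+1]
  have hv_int : IntervalIntegrable (fun s => (s - x) ^ (1 - α)) volume x (x + 1) := by
    have h0 : IntervalIntegrable (fun s : ℝ => s ^ (1 - α)) volume 0 1 :=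
      intervalIntegral.intervalIntegrable_rpow' (by linarith)
    have := h0.comp_sub_right x
    simpa [add_comm] using this
  have hφint1 : IntervalIntegrable φ volume x (x + 1) := by
    rw [intervalIntegrable_iff_integrableOn_Ioc_of_le (by linarith)]
    refine Integrable.mono' (g := fun s => M * (s - x) ^ (1 - α)) (((intervalIntegrable_iff_integrableOn_Ioc_of_le (by linarith)).1 hv_int).const_mul M) hφmeas.restrict ?_
    refine (ae_restrict_mem measurableSet_Ioc).mono fun s hs => ?_
    have h1 : (0:ℝ) ≤ (s - x) ^ (1 - α) := Real.rpow_nonneg (by simp at hs; linarith [hs.1]) _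
    calc ‖φ s‖ = |f s| * |(s - x) ^ (1 - α)| := abs_mul _ _
      _ ≤ M * (s - x) ^ (1 - α) := by
          rw [abs_of_nonneg h1]; exact mul_le_mul_of_nonneg_right (hM s) h1
  -- integrability of φ on [x+1, T]
  have hφint2 : ∀ T, x + 1 ≤ T → IntervalIntegrable φ volume (x + 1) T := by
    intro T hT
    rw [intervalIntegrable_iff_integrableOn_Ioc_of_le hT]
    refine Integrable.mono' (g := fun _ => M) (integrableOn_const measure_Ioc_lt_top.ne) hφmeas.restrict ?_
    refine (ae_restrict_mem measurableSet_Ioc).mono fun s hs => ?_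
    simp only [Set.mem_Ioc] at hs
    have hs1 : (1:ℝ) ≤ s - x := by linarith [hs.1]
    have h1 : (s - x) ^ (1 - α) ≤ 1 :=
      Real.rpow_le_one_of_one_le_of_nonpos hs1 (by linarith)
    have h0 : (0:ℝ) ≤ (s - x) ^ (1 - α) := Real.rpow_nonneg (by linarith) _
    calc ‖φ s‖ = |f s| * |(s - x) ^ (1 - α)| := abs_mul _ _
      _ ≤ M * 1 := mul_le_mul (hM s) (by rwa [abs_of_nonneg h0]) (abs_nonneg _) hM0
      _ = M := mul_one M
  -- integrability of g on Ioi (x+1)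
  have hgint : IntegrableOn g (Ioi (x + 1)) volume := by
    have h1 : IntegrableOn (fun t : ℝ => t ^ (-α)) (Ioi 1) volume :=
      integrableOn_Ioi_rpow_of_lt (by linarith) one_pos
    have h2 : IntegrableOn (fun s : ℝ => (s - x) ^ (-α)) (Ioi (x + 1)) volume := by
      have hmp : MeasurePreserving (fun s : ℝ => s - x) volume volume :=
        measurePreserving_sub_right volume x
      have hemb : MeasurableEmbedding (fun s : ℝ => s - x) :=
        (MeasurableEquiv.subRight x).measurableEmbedding
      have := (hmp.integrableOn_comp_preimage hemb).2 h1
      have hpre : (fun s : ℝ => s - x) ⁻¹' (Ioi 1) = Ioi (x + 1) := by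
        ext s; simp [Set.mem_Ioi, lt_sub_iff_add_lt, add_comm]
      rwa [hpre] at this
    refine Integrable.mono' (g := fun s => C * (s - x) ^ (-α)) (h2.const_mul C) hgmeas.aestronglyMeasurable.restrict ?_
    refine (ae_restrict_mem measurableSet_Ioi).mono fun s hs => ?_
    simp only [Set.mem_Ioi] at hs
    have h0 : (0:ℝ) ≤ (s - x) ^ (-α) := Real.rpow_nonneg (by linarith) _
    calc ‖g s‖ = |F s| * |(s - x) ^ (-α)| := abs_mul _ _
      _ ≤ C * (s - x) ^ (-α) := by
          rw [abs_of_nonneg h0]; exact mul_le_mul_of_nonneg_right (hC s) h0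
  have hgint2 : ∀ T, x + 1 ≤ T → IntervalIntegrable g volume (x + 1) T := by
    intro T hT
    rw [intervalIntegrable_iff_integrableOn_Ioc_of_le hT]
    exact hgint.mono_set Set.Ioc_subset_Ioi_self
  -- the integration-by-parts identity
  have key : ∀ T, x + 1 ≤ T →
      (∫ s in x..T, φ s) = (∫ s in x..(x+1), φ s)
        + (F T * (T - x) ^ (1 - α) - F (x+1)) + (α - 1) * ∫ s in (x+1)..T, g s := by
    intro T hT
    have hsplit : (∫ s in x..T, φ s) = (∫ s in x..(x+1), φ s) + ∫ s in (x+1)..T, φ s :=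
      (intervalIntegral.integral_add_adjacent_intervals hφint1 (hφint2 T hT)).symm
    set H : ℝ → ℝ := fun s => F s * (s - x) ^ (1 - α) with hHdef
    set w : ℝ → ℝ := fun s => φ s + (1 - α) * g s with hwdef
    have hwint : IntervalIntegrable w volume (x+1) T :=
      (hφint2 T hT).add ((hgint2 T hT).const_mul (1 - α))
    have Hcont : ContinuousOn H (Icc (x+1) T) := by
      refine hFcont.continuousOn.mul (fun s hs => ?_)
      have h0 : s - x ≠ 0 := by
        have := hs.1; simp only [Set.mem_Icc] at hs; intro h; linarith [hs.1]
      exact (ContinuousAt.rpow_const ((continuous_id.sub continuous_const).continuousAt)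
        (Or.inl h0)).continuousWithinAt
    have Hd : ∀ s ∈ Ioo (x+1) T \ D, HasDerivAt H (w s) s := by
      intro s hs
      obtain ⟨hs1, hs2⟩ := hs
      simp only [Set.mem_Ioo] at hs1
      have hsx : x < s := by linarith [hs1.1]
      have hfc : ContinuousAt f s := by
        refine hcont s fun k hk => hs2 ⟨k, hk.symm⟩
      have hF' : HasDerivAt F (f s) s :=
        intervalIntegral.integral_hasDerivAt_right (hfint x s)
          ⟨Set.univ, Filter.univ_mem, hmeas.restrict⟩ hfc
      have hv' : HasDerivAt (fun s => (s - x) ^ (1 - α)) ((1 - α) * (s - x) ^ (-α)) s := by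
        have := ((hasDerivAt_id s).sub_const x).rpow_const
          (p := 1 - α) (Or.inl (by intro h; simp at h; linarith))
        simpa [show (1 - α - 1) = -α by ring] using this
      have := hF'.mul hv'
      simpa [Pi.mul_def, hHdef, hwdef, hφdef, hgdef, mul_comm, mul_left_comm, mul_assoc] using this
    have hFTC := MeasureTheory.integral_eq_of_hasDerivAt_off_countable_of_le H w hT
      hDc Hcont Hd hwint
    have hw_split : (∫ s in (x+1)..T, w s)
        = (∫ s in (x+1)..T, φ s) + (1 - α) * ∫ s in (x+1)..T, g s := by
      rw [intervalIntegral.integral_add (hφint2 T hT) ((hgint2 T hT).const_mul (1 - α)),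
        intervalIntegral.integral_const_mul]
    have hH1 : H (x+1) = F (x+1) := by
      simp [hHdef, show x + 1 - x = (1:ℝ) by ring, Real.one_rpow]
    rw [hw_split] at hFTC
    rw [hsplit]
    have : (∫ s in (x+1)..T, φ s)
        = F T * (T - x) ^ (1 - α) - F (x+1) + (α - 1) * ∫ s in (x+1)..T, g s := by
      have := hFTC
      rw [hH1] at this
      simp only [hHdef] at this
      linarith [this]
    rw [this]; ring
  -- limits
  have tendsto1 : Tendsto (fun T => F T * (T - x) ^ (1 - α)) atTop (𝓝 0) := by
    have hb : Tendsto (fun T : ℝ => C * (T - x) ^ (-(α - 1))) atTop (𝓝 (C * 0)) := by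
      refine Tendsto.const_mul C ?_
      exact (tendsto_rpow_neg_atTop (by linarith)).comp
        (tendsto_atTop_add_const_right atTop (-x) tendsto_id)
    rw [mul_zero] at hb
    refine squeeze_zero_norm' ?_ hb
    filter_upwards [Filter.eventually_gt_atTop x] with T hT
    have h0 : (0:ℝ) ≤ (T - x) ^ (1 - α) := Real.rpow_nonneg (by linarith) _
    have : (T - x) ^ (1 - α) = (T - x) ^ (-(α - 1)) := by norm_num
    calc ‖F T * (T - x) ^ (1 - α)‖ = |F T| * |(T - x) ^ (1 - α)| := abs_mul _ _
      _ ≤ C * (T - x) ^ (1 - α) := by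
          rw [abs_of_nonneg h0]; exact mul_le_mul_of_nonneg_right (hC T) h0
      _ = C * (T - x) ^ (-(α - 1)) := by rw [this]
  have tendsto2 : Tendsto (fun T => ∫ s in (x+1)..T, g s) atTop
      (𝓝 (∫ s in Ioi (x+1), g s)) :=
    MeasureTheory.intervalIntegral_tendsto_integral_Ioi (x+1) hgint tendsto_id
  refine ⟨(∫ s in x..(x+1), φ s) + (0 - F (x+1)) + (α - 1) * ∫ s in Ioi (x+1), g s, ?_⟩
  have htend : Tendsto (fun T => (∫ s in x..(x+1), φ s)
      + (F T * (T - x) ^ (1 - α) - F (x+1)) + (α - 1) * ∫ s in (x+1)..T, g s) atTop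
      (𝓝 ((∫ s in x..(x+1), φ s) + (0 - F (x+1)) + (α - 1) * ∫ s in Ioi (x+1), g s)) :=
    (tendsto_const_nhds.add ((tendsto1.sub tendsto_const_nhds))).add (tendsto2.const_mul (α - 1))
  refine htend.congr' ?_
  filter_upwards [Filter.eventually_ge_atTop (x+1)] with T hT
  exact (key T hT).symm

/-- For `a < b`, `α ∈ (1,2)` and `f : ℝ → ℝ` bounded, `(b-a)`-periodic, with
zero mean on `[a,b]` and continuous away from the points `a + k(b-a)`, both improper
fractional integrals of order `2-α` of `f` exist (as finite limits) at every `x`. -/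
theorem fractional_integrals_exist
    (a b α : ℝ) (hab : a < b) (hα : α ∈ Set.Ioo (1 : ℝ) 2)
    (f : ℝ → ℝ)
    (hbd : ∃ M, ∀ x, |f x| ≤ M)
    (hper : ∀ x, f (x + (b - a)) = f x)
    (hmean : (∫ s in a..b, f s) = 0)
    (hcont : ∀ x, (∀ k : ℤ, x ≠ a + k * (b - a)) → ContinuousAt f x) :
    ∀ x : ℝ,
      (∃ L : ℝ, Tendsto (fun T => ∫ s in x..T, f s * (s - x) ^ (1 - α)) atTop (𝓝 L)) ∧
      (∃ L : ℝ, Tendsto (fun T => ∫ s in (-T)..x, f s * (x - s) ^ (1 - α)) atTop (𝓝 L)) := by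
  intro x
  constructor
  · exact exists_tendsto_right a b α hab hα f hbd hper hmean hcont x
  · -- reflect
    set f' : ℝ → ℝ := fun s => f (-s) with hf'def
    have h1 : -b < -a := by linarith
    have hbd' : ∃ M, ∀ x, |f' x| ≤ M := hbd.imp fun M hM x => hM (-x)
    have hper' : ∀ y, f' (y + (-a - -b)) = f' y := by
      intro y
      have := hper (-y - (b - a))
      simp only [hf'def]
      have h2 : -(y + (-a - -b)) = -y - (b - a) := by ring
      rw [h2, ← this]
      ring_nf
    have hmean' : (∫ s in (-b)..(-a), f' s) = 0 := by
      have h := intervalIntegral.integral_comp_neg (a := -b) (b := -a) f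
      simp only [neg_neg] at h
      simpa [hf'def] using h.trans hmean
    have hcont' : ∀ y, (∀ k : ℤ, y ≠ -b + k * (-a - -b)) → ContinuousAt f' y := by
      intro y hy
      have hy' : ∀ k : ℤ, -y ≠ a + k * (b - a) := by
        intro k hk
        refine hy (1 - k) ?_
        push_cast
        linarith [hk]
      exact (hcont (-y) hy').comp (continuous_neg.continuousAt)
    obtain ⟨L, hL⟩ := exists_tendsto_right (-b) (-a) α h1 hα f' hbd' hper' hmean' hcont' (-x)
    refine ⟨L, hL.congr fun T => ?_⟩
    have := intervalIntegral.integral_comp_neg (a := -x) (b := T)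
      (fun s => f s * (x - s) ^ (1 - α))
    simp only [neg_neg] at this
    rw [← this]
    congr 1
    ext s
    simp only [hf'def]
    ring_nf
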